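/- Let S₁ be an r₁-regular signed graph with adjacency matrix A₁ (n₁×n₁) whose Laplacian L₁ has eigenvalues λ₁,…,λ_{n₁} listed with multiplicity, and let S₂ be an r₂-regular, r₃-net regular signed graph with adjacency matrix A₂ (n₂×n₂) and Laplacian L₂. Let L be the Laplacian of S₁ ⋆ₛ S₂. Then for every real t such that (t − r₁)I_{n₂} − L₂ is invertible, det(tI_{n₁(n₂+1)} − L) · (t − r₁ − (r₂ − r₃))^{n₁} = det((t − r₁)I_{n₂} − L₂)^{n₁} · ∏_{i=1}^{n₁} ((t − r₁n₂ − λᵢ)(t − r₁ − (r₂ − r₃)) − n₂(r₁ − λᵢ)²). -/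

import Mathlib

open Matrix BigOperators Kronecker

/-- A signed graph on vertex set `V` is represented by its adjacency matrix: a real symmetric
matrix with zero diagonal and all entries in `{-1, 0, 1}`. -/
def IsSignedAdj {V : Type*} (A : Matrix V V ℝ) : Prop :=
  A.IsHermitian ∧ (∀ i, A i i = 0) ∧ ∀ i j, A i j = -1 ∨ A i j = 0 ∨ A i j = 1

/-- The degree matrix of a signed graph: the diagonal matrix of row sums of `|A|`. -/
def degMat {n : ℕ} (A : Matrix (Fin n) (Fin n) ℝ) : Matrix (Fin n) (Fin n) ℝ :=
  Matrix.diagonal fun i => ∑ j, |A i j|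

/-- The Laplacian matrix `L_A = D_A − A` of a signed graph. -/
def lap {n : ℕ} (A : Matrix (Fin n) (Fin n) ℝ) : Matrix (Fin n) (Fin n) ℝ :=
  degMat A - A

/-- The Laplacian matrix of the s-neighbourhood corona `S₁ ⋆ₛ S₂`: the block matrix
`[[L₁ + n₂D₁, −(jᵀ ⊗ A₁)], [−(jᵀ ⊗ A₁)ᵀ, L₂ ⊗ I + I ⊗ D₁]]`. -/
def coronaLap {n₁ n₂ : ℕ} (A₁ : Matrix (Fin n₁) (Fin n₁) ℝ) (A₂ : Matrix (Fin n₂) (Fin n₂) ℝ) :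
    Matrix (Fin n₁ ⊕ Fin n₂ × Fin n₁) (Fin n₁ ⊕ Fin n₂ × Fin n₁) ℝ :=
  Matrix.fromBlocks (lap A₁ + (n₂ : ℝ) • degMat A₁)
    (Matrix.of fun i p => -(A₁ i p.2))
    (Matrix.of fun p j => -(A₁ p.2 j))
    (lap A₂ ⊗ₖ (1 : Matrix (Fin n₁) (Fin n₁) ℝ) + (1 : Matrix (Fin n₂) (Fin n₂) ℝ) ⊗ₖ degMat A₁)

lemma det_quad_hermitian {n : ℕ} {A : Matrix (Fin n) (Fin n) ℝ} (hA : A.IsHermitian)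
    (x y z : ℝ) :
    (x • 1 + y • A + z • (A * A)).det
      = ∏ i, (x + y * hA.eigenvalues i + z * (hA.eigenvalues i) ^ 2) := by
  set U : Matrix (Fin n) (Fin n) ℝ := (hA.eigenvectorUnitary : Matrix (Fin n) (Fin n) ℝ) with hUdef
  set d := hA.eigenvalues
  have hU : U * star U = 1 := (Matrix.mem_unitaryGroup_iff).mp hA.eigenvectorUnitary.2
  have hU' : star U * U = 1 := (Matrix.mem_unitaryGroup_iff').mp hA.eigenvectorUnitary.2
  have hspec : A = U * diagonal d * star U := by
    have := hA.spectral_theorem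
    simpa using this
  have hAA : A * A = U * (diagonal d * diagonal d) * star U := by
    rw [hspec, show U * diagonal d * star U * (U * diagonal d * star U)
        = U * diagonal d * (star U * U) * (diagonal d * star U) by noncomm_ring, hU']
    noncomm_ring
  have key : x • 1 + y • A + z • (A * A)
      = U * (x • 1 + y • diagonal d + z • (diagonal d * diagonal d)) * star U := by
    rw [hAA, hspec]
    simp only [Matrix.mul_add, Matrix.add_mul, Matrix.mul_smul, Matrix.smul_mul, Matrix.mul_one]
    rw [hU]
  have hdetU : U.det * (star U).det = 1 := by rw [← det_mul, hU, det_one]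
  have hdiag : x • (1 : Matrix (Fin n) (Fin n) ℝ) + y • diagonal d + z • (diagonal d * diagonal d)
      = diagonal (fun i => x + y * d i + z * (d i) ^ 2) := by
    rw [diagonal_mul_diagonal, ← diagonal_one]
    ext i j
    by_cases h : i = j <;> simp [Matrix.diagonal_apply, h, sq]
  rw [key, det_mul, det_mul, mul_comm, ← mul_assoc, mul_comm ((star U).det), hdetU, one_mul,
    hdiag, det_diagonal]

/-- Let `S₁` be an `r₁`-regular signed graph whose Laplacian `L₁` has eigenvalues
`λ₁, …, λ_{n₁}` (with multiplicity), and let `S₂` be an `r₂`-regular, `r₃`-net regular signed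
graph.  For every real `t` with `(t − r₁)I − L₂` invertible, the Laplacian `L` of `S₁ ⋆ₛ S₂`
satisfies `det(tI − L)·(t − r₁ − (r₂ − r₃))^{n₁}
  = det((t − r₁)I − L₂)^{n₁} · ∏ᵢ ((t − r₁n₂ − λᵢ)(t − r₁ − (r₂ − r₃)) − n₂(r₁ − λᵢ)²)`. -/
theorem det_corona_lap_regular {n₁ n₂ : ℕ}
    (A₁ : Matrix (Fin n₁) (Fin n₁) ℝ) (A₂ : Matrix (Fin n₂) (Fin n₂) ℝ)
    (h₁ : IsSignedAdj A₁) (h₂ : IsSignedAdj A₂)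
    (r₁ r₂ r₃ : ℝ)
    (hreg₁ : ∀ i, ∑ j, |A₁ i j| = r₁)
    (hreg₂ : ∀ i, ∑ j, |A₂ i j| = r₂)
    (hnet₂ : ∀ i, ∑ j, A₂ i j = r₃)
    (hL₁ : (lap A₁).IsHermitian)
    (t : ℝ) (hinv : IsUnit ((t - r₁) • (1 : Matrix (Fin n₂) (Fin n₂) ℝ) - lap A₂).det) :
    (t • (1 : Matrix (Fin n₁ ⊕ Fin n₂ × Fin n₁) (Fin n₁ ⊕ Fin n₂ × Fin n₁) ℝ)
        - coronaLap A₁ A₂).det * (t - r₁ - (r₂ - r₃)) ^ n₁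
      = ((t - r₁) • (1 : Matrix (Fin n₂) (Fin n₂) ℝ) - lap A₂).det ^ n₁ *
        ∏ i, ((t - r₁ * n₂ - hL₁.eigenvalues i) * (t - r₁ - (r₂ - r₃))
            - (n₂ : ℝ) * (r₁ - hL₁.eigenvalues i) ^ 2) := by
  set N : Matrix (Fin n₂) (Fin n₂) ℝ := (t - r₁) • 1 - lap A₂ with hN
  set s : ℝ := t - r₁ - (r₂ - r₃) with hs
  -- degree matrices are scalar
  have hD₁ : degMat A₁ = r₁ • (1 : Matrix (Fin n₁) (Fin n₁) ℝ) := by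
    ext i j
    by_cases h : i = j <;>
      simp [degMat, Matrix.diagonal_apply, Matrix.one_apply, h, hreg₁]
  -- row sums of N are all s
  have hNrow : ∀ i, ∑ j, N i j = s := by
    intro i
    have h2 : ∑ j, degMat A₂ i j = r₂ := by
      simp [degMat, Matrix.diagonal_apply, Finset.sum_ite_eq, hreg₂ i]
    simp only [hN, Matrix.sub_apply, Matrix.smul_apply, Matrix.one_apply, lap,
      Finset.sum_sub_distrib]
    rw [hnet₂ i, h2]
    simp [Finset.sum_ite_eq, hs]
  -- N acts on the all-ones vector as multiplication by s
  have hNone : N *ᵥ (fun _ => (1:ℝ)) = fun _ => s := by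
    funext i
    simp [Matrix.mulVec, dotProduct, hNrow i]
  have hmulinv : N⁻¹ * N = 1 := Matrix.nonsing_inv_mul N hinv
  have hns : n₂ = 0 ∨ s ≠ 0 := by
    rcases Nat.eq_zero_or_pos n₂ with h | h
    · exact Or.inl h
    · right
      intro hs0
      have h1 : N⁻¹ *ᵥ (N *ᵥ (fun _ => (1:ℝ))) = fun _ => (1:ℝ) := by
        rw [Matrix.mulVec_mulVec, hmulinv, Matrix.one_mulVec]
      rw [hNone, hs0] at h1
      have := congrFun h1 ⟨0, h⟩
      simp [Matrix.mulVec, dotProduct] at this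
  have hsum : ∑ k, ∑ l, N⁻¹ k l = (n₂ : ℝ) / s := by
    rcases hns with h | h
    · subst h
      simp
    · have h1 : N⁻¹ *ᵥ (N *ᵥ (fun _ => (1:ℝ))) = fun _ => (1:ℝ) := by
        rw [Matrix.mulVec_mulVec, hmulinv, Matrix.one_mulVec]
      rw [hNone] at h1
      have h2 : ∀ k, ∑ l, N⁻¹ k l = 1 / s := by
        intro k
        have := congrFun h1 k
        simp only [Matrix.mulVec, dotProduct] at this
        field_simp at this ⊢
        rw [← this]
        rw [Finset.mul_sum]
        exact Finset.sum_congr rfl fun _ _ => mul_comm _ _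
      simp [h2]
      field_simp
  -- identify the bottom-right block
  have hC : (t • (1 : Matrix (Fin n₂ × Fin n₁) (Fin n₂ × Fin n₁) ℝ)
        - (lap A₂ ⊗ₖ (1 : Matrix (Fin n₁) (Fin n₁) ℝ)
          + (1 : Matrix (Fin n₂) (Fin n₂) ℝ) ⊗ₖ degMat A₁))
      = N ⊗ₖ (1 : Matrix (Fin n₁) (Fin n₁) ℝ) := by
    rw [hD₁, hN]
    ext ⟨a, b⟩ ⟨c, d⟩
    by_cases h1 : a = c <;> by_cases h2 : b = d <;>
      simp [Matrix.one_apply, Prod.ext_iff, h1, h2] <;> ring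
  have hsplit : t • (1 : Matrix (Fin n₁ ⊕ Fin n₂ × Fin n₁) (Fin n₁ ⊕ Fin n₂ × Fin n₁) ℝ)
        - coronaLap A₁ A₂
      = Matrix.fromBlocks (t • 1 - (lap A₁ + (n₂ : ℝ) • degMat A₁))
          (Matrix.of fun i p => A₁ i p.2) (Matrix.of fun p j => A₁ p.2 j)
          (N ⊗ₖ (1 : Matrix (Fin n₁) (Fin n₁) ℝ)) := by
    rw [← hC]
    ext (i | p) (j | q) <;>
      simp [coronaLap, Matrix.one_apply]
  haveI hKinv : Invertible (N ⊗ₖ (1 : Matrix (Fin n₁) (Fin n₁) ℝ)) := by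
    apply Matrix.invertibleOfIsUnitDet
    rw [Matrix.det_kronecker, Matrix.det_one, one_pow, mul_one]
    exact hinv.pow _
  have hinvOf : ⅟(N ⊗ₖ (1 : Matrix (Fin n₁) (Fin n₁) ℝ)) = N⁻¹ ⊗ₖ 1 := by
    rw [Matrix.invOf_eq_nonsing_inv, Matrix.inv_kronecker, inv_one]
  rw [hsplit, Matrix.det_fromBlocks₂₂, hinvOf]
  -- the Schur correction term
  have hmid : (Matrix.of fun (i : Fin n₁) (p : Fin n₂ × Fin n₁) => A₁ i p.2)
        * (N⁻¹ ⊗ₖ (1 : Matrix (Fin n₁) (Fin n₁) ℝ))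
        * (Matrix.of fun (p : Fin n₂ × Fin n₁) (j : Fin n₁) => A₁ p.2 j)
      = (∑ k, ∑ l, N⁻¹ k l) • (A₁ * A₁) := by
    ext i j
    simp only [Matrix.mul_apply, Matrix.kroneckerMap_apply, Matrix.of_apply, Matrix.smul_apply,
      Matrix.one_apply, Fintype.sum_prod_type, smul_eq_mul, mul_ite, mul_one, mul_zero,
      Finset.sum_ite_eq, Finset.mem_univ, if_true, ite_mul, zero_mul, Finset.sum_mul,
      Finset.mul_sum]
    rw [Finset.sum_comm]
    refine Finset.sum_congr rfl fun p2 _ => ?_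
    rw [Finset.sum_comm]
    refine Finset.sum_congr rfl fun k _ => ?_
    refine Finset.sum_congr rfl fun l _ => ?_
    simp only [Finset.sum_ite_eq', Finset.mem_univ, if_true]
    ring
  rw [hmid, hsum]
  rw [Matrix.det_kronecker, Matrix.det_one, one_pow, mul_one, Fintype.card_fin]
  have hA1 : A₁ = r₁ • 1 - lap A₁ := by
    show A₁ = r₁ • 1 - (degMat A₁ - A₁)
    rw [hD₁]; abel
  have hquad : t • (1 : Matrix (Fin n₁) (Fin n₁) ℝ) - (lap A₁ + (n₂ : ℝ) • degMat A₁)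
        - ((n₂ : ℝ) / s) • (A₁ * A₁)
      = (t - (n₂ : ℝ) * r₁ - ((n₂ : ℝ) / s) * r₁ ^ 2) • 1
        + (2 * ((n₂ : ℝ) / s) * r₁ - 1) • lap A₁
        + (-((n₂ : ℝ) / s)) • (lap A₁ * lap A₁) := by
    rw [hD₁, show A₁ * A₁ = (r₁ • 1 - lap A₁) * (r₁ • 1 - lap A₁) by rw [← hA1]]
    simp only [sub_mul, mul_sub, Matrix.smul_mul, Matrix.mul_smul, Matrix.mul_one,
      Matrix.one_mul, smul_smul]
    module
  rw [hquad, det_quad_hermitian hL₁, mul_assoc]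
  congr 1
  rw [show (s ^ n₁ : ℝ) = ∏ _i : Fin n₁, s by simp, ← Finset.prod_mul_distrib]
  refine Finset.prod_congr rfl fun i _ => ?_
  rcases hns with h | h
  · subst h
    push_cast
    ring
  · field_simp
    ring
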